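/- Let n and k be integers with 2 ≤ k ≤ n, let λ := k·e^{−n/k}, and suppose λ ≥ 1; set j₀ := ⌊λ⌋. Then (λ^{j₀}/j₀!)·exp(−2n·e^{−2n/k}/(1 − 1/e − 1/2)) ≤ max_{0 ≤ j ≤ k} b_{n,k}(j) ≤ λ^{j₀}/j₀!. -/

import Mathlib

open Finset

/-- `b_{n,k}(j) = C(k,j)·(1 − j/k)ⁿ`. -/
noncomputable def bnk (n k j : ℕ) : ℝ :=
  (k.choose j : ℝ) * (1 - (j : ℝ) / k) ^ n

set_option maxHeartbeats 1000000 in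
/-- For `2 ≤ k ≤ n` with `λ := k·e^{−n/k} ≥ 1` and `j₀ := ⌊λ⌋`,
`(λ^{j₀}/j₀!)·exp(−2n·e^{−2n/k}/(1 − 1/e − 1/2)) ≤ max_{0 ≤ j ≤ k} b_{n,k}(j) ≤ λ^{j₀}/j₀!`. -/
theorem bnk_max_bounds (n k : ℕ) (hk : 2 ≤ k) (hkn : k ≤ n)
    (hlam : 1 ≤ (k : ℝ) * Real.exp (-(n : ℝ) / k)) :
    ((k : ℝ) * Real.exp (-(n : ℝ) / k)) ^ ⌊(k : ℝ) * Real.exp (-(n : ℝ) / k)⌋₊ /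
        (Nat.factorial ⌊(k : ℝ) * Real.exp (-(n : ℝ) / k)⌋₊) *
        Real.exp (-(2 * (n : ℝ) * Real.exp (-(2 * (n : ℝ)) / k)) /
          (1 - 1 / Real.exp 1 - 1 / 2)) ≤
      (Finset.range (k + 1)).sup' Finset.nonempty_range_add_one (bnk n k) ∧
    (Finset.range (k + 1)).sup' Finset.nonempty_range_add_one (bnk n k) ≤
      ((k : ℝ) * Real.exp (-(n : ℝ) / k)) ^ ⌊(k : ℝ) * Real.exp (-(n : ℝ) / k)⌋₊ /
        (Nat.factorial ⌊(k : ℝ) * Real.exp (-(n : ℝ) / k)⌋₊) := by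
  have hk0 : (0:ℝ) < k := by exact_mod_cast (by omega : 0 < k)
  have hkn' : (k:ℝ) ≤ n := by exact_mod_cast hkn
  set x : ℝ := Real.exp (-(n : ℝ) / k) with hxdef
  set lam : ℝ := (k : ℝ) * x with hlamdef
  set j₀ : ℕ := ⌊lam⌋₊ with hj0def
  have hxpos : 0 < x := Real.exp_pos _
  have hxe : x ≤ Real.exp (-1) := by
    apply Real.exp_le_exp.mpr
    rw [neg_div, neg_le_neg_iff, le_div_iff₀ hk0]
    calc (1:ℝ) * k = k := one_mul _
      _ ≤ n := hkn'
  have he2 : (2:ℝ) < Real.exp 1 := by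
    have := Real.exp_one_gt_d9; nlinarith
  have hxhalf : x < 1/2 := by
    have h1 : Real.exp (-1) = (Real.exp 1)⁻¹ := Real.exp_neg 1
    have h2 : (Real.exp 1)⁻¹ < 1/2 := by
      rw [inv_lt_comm₀ (by positivity) (by norm_num)]
      norm_num
      linarith
    calc x ≤ Real.exp (-1) := hxe
      _ = (Real.exp 1)⁻¹ := h1
      _ < 1/2 := h2
  have hx1 : x < 1 := by linarith
  have hlam_pos : 0 < lam := by positivity
  have hfl : (j₀ : ℝ) ≤ lam := Nat.floor_le hlam_pos.le
  have hfl1 : lam < (j₀ : ℝ) + 1 := Nat.lt_floor_add_one lam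
  have hj0k : j₀ < k := by
    have h : (j₀ : ℝ) < k := by
      calc (j₀ : ℝ) ≤ k * x := hfl
        _ < k * 1 := by apply mul_lt_mul_of_pos_left hx1 hk0
        _ = k := by ring
    exact_mod_cast h
  set t : ℝ := (j₀ : ℝ) / k with htdef
  have ht0 : 0 ≤ t := by positivity
  have htx : t ≤ x := by
    rw [htdef, div_le_iff₀ hk0]
    calc (j₀ : ℝ) ≤ lam := hfl
      _ = x * k := by rw [hlamdef]; ring
  have ht1 : t < 1 := lt_of_le_of_lt htx hx1
  have h1t : 0 < 1 - t := by linarith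
  -- the function λ^j / j!
  set f : ℕ → ℝ := fun j => lam ^ j / (Nat.factorial j : ℝ) with hfdef
  -- step inequalities
  have hstep_up : ∀ j : ℕ, j + 1 ≤ j₀ → f j ≤ f (j + 1) := by
    intro j hj
    have hjl : (j : ℝ) + 1 ≤ lam := by
      have h : ((j + 1 : ℕ) : ℝ) ≤ (j₀ : ℝ) := by exact_mod_cast hj
      push_cast at h; linarith
    have hf1 : (0:ℝ) < (Nat.factorial j : ℝ) := by exact_mod_cast Nat.factorial_pos j
    have hf2 : (0:ℝ) < (Nat.factorial (j+1) : ℝ) := by exact_mod_cast Nat.factorial_pos (j+1)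
    rw [hfdef]
    simp only
    rw [div_le_div_iff₀ hf1 hf2]
    have hfs : (Nat.factorial (j+1) : ℝ) = ((j:ℝ) + 1) * (Nat.factorial j : ℝ) := by
      rw [Nat.factorial_succ]; push_cast; ring
    rw [hfs, pow_succ]
    have hlp : 0 < lam ^ j := pow_pos hlam_pos j
    have hm := mul_le_mul_of_nonneg_left hjl (mul_pos hlp hf1).le
    nlinarith [hm]
  have hstep_down : ∀ j : ℕ, j₀ ≤ j → f (j + 1) ≤ f j := by
    intro j hj
    have hjl : lam ≤ (j : ℝ) + 1 := by
      have h : (j₀ : ℝ) ≤ (j : ℝ) := by exact_mod_cast hj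
      linarith
    have hf1 : (0:ℝ) < (Nat.factorial j : ℝ) := by exact_mod_cast Nat.factorial_pos j
    have hf2 : (0:ℝ) < (Nat.factorial (j+1) : ℝ) := by exact_mod_cast Nat.factorial_pos (j+1)
    rw [hfdef]
    simp only
    rw [div_le_div_iff₀ hf2 hf1]
    have hfs : (Nat.factorial (j+1) : ℝ) = ((j:ℝ) + 1) * (Nat.factorial j : ℝ) := by
      rw [Nat.factorial_succ]; push_cast; ring
    rw [hfs, pow_succ]
    have hlp : 0 < lam ^ j := pow_pos hlam_pos j
    have hm := mul_le_mul_of_nonneg_left hjl (mul_pos hlp hf1).le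
    nlinarith [hm]
  have hup : ∀ d j : ℕ, j + d = j₀ → f j ≤ f j₀ := by
    intro d
    induction d with
    | zero => intro j h; simp only [Nat.add_zero] at h; subst h; exact le_refl _
    | succ d ih =>
        intro j h
        exact le_trans (hstep_up j (by omega)) (ih (j + 1) (by omega))
  have hdown : ∀ d : ℕ, f (j₀ + d) ≤ f j₀ := by
    intro d
    induction d with
    | zero => exact le_refl _
    | succ d ih => exact le_trans (hstep_down (j₀ + d) (by omega)) ih
  have hmode : ∀ j : ℕ, f j ≤ f j₀ := by
    intro j
    rcases le_or_gt j j₀ with h | h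
    · exact hup (j₀ - j) j (by omega)
    · have hj : j = j₀ + (j - j₀) := by omega
      rw [hj]; exact hdown (j - j₀)
  -- per-j upper bound
  have hub : ∀ j : ℕ, j ≤ k → bnk n k j ≤ f j := by
    intro j hj
    have h1 : (k.choose j : ℝ) ≤ (k : ℝ) ^ j / (Nat.factorial j : ℝ) := by
      have h := Nat.choose_le_pow_div (α := ℝ) j k
      push_cast at h ⊢; exact h
    have hjk : (j : ℝ) / k ≤ 1 := by
      rw [div_le_one hk0]; exact_mod_cast hj
    have h2base : (0:ℝ) ≤ 1 - (j:ℝ)/k := by linarith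
    have h2b : 1 - (j:ℝ)/k ≤ Real.exp (-((j:ℝ)/k)) := by
      have h := Real.add_one_le_exp (-((j:ℝ)/k)); linarith
    have h2 : (1 - (j:ℝ)/k) ^ n ≤ x ^ j := by
      calc (1 - (j:ℝ)/k) ^ n ≤ (Real.exp (-((j:ℝ)/k))) ^ n :=
            pow_le_pow_left₀ h2base h2b n
        _ = Real.exp ((n:ℝ) * (-((j:ℝ)/k))) := (Real.exp_nat_mul _ n).symm
        _ = Real.exp ((j:ℝ) * (-(n:ℝ)/k)) := by ring_nf
        _ = x ^ j := by rw [hxdef, Real.exp_nat_mul]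
    calc bnk n k j = (k.choose j : ℝ) * (1 - (j:ℝ)/k) ^ n := rfl
      _ ≤ ((k : ℝ) ^ j / (Nat.factorial j : ℝ)) * x ^ j := by
          apply mul_le_mul h1 h2 (by positivity) (by positivity)
      _ = f j := by
          rw [hfdef]; simp only; rw [hlamdef, mul_pow]; ring
  -- upper bound on the sup
  have hupper : (Finset.range (k + 1)).sup' Finset.nonempty_range_add_one (bnk n k) ≤ f j₀ := by
    apply Finset.sup'_le
    intro j hj
    rw [Finset.mem_range] at hj
    exact le_trans (hub j (by omega)) (hmode j)
  have hj0mem : j₀ ∈ Finset.range (k + 1) := Finset.mem_range.mpr (by omega)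
  have hfle : bnk n k j₀ ≤ (Finset.range (k + 1)).sup' Finset.nonempty_range_add_one (bnk n k) :=
    Finset.le_sup' (bnk n k) hj0mem
  set C : ℝ := -(2 * (n : ℝ) * Real.exp (-(2 * (n : ℝ)) / k)) / (1 - 1 / Real.exp 1 - 1 / 2)
    with hCdef
  have hfac : (0:ℝ) < (Nat.factorial j₀ : ℝ) := by exact_mod_cast Nat.factorial_pos j₀
  have hx2 : Real.exp (-(2 * (n : ℝ)) / k) = x ^ 2 := by
    rw [hxdef, ← Real.exp_nat_mul]
    congr 1; push_cast; ring
  -- choose lower bound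
  have hch : ((k:ℝ) * (1 - t)) ^ j₀ / (Nat.factorial j₀ : ℝ) ≤ (k.choose j₀ : ℝ) := by
    have hsub : ((k + 1 - j₀ : ℕ) : ℝ) = (k:ℝ) + 1 - (j₀:ℝ) := by
      have hle : j₀ ≤ k + 1 := by omega
      push_cast [Nat.cast_sub hle]; ring
    have hkt : (k:ℝ) * (1 - t) = (k:ℝ) - (j₀:ℝ) := by
      rw [htdef]; field_simp
    have hb : (0:ℝ) ≤ (k:ℝ) - (j₀:ℝ) := by
      have h : (j₀:ℝ) ≤ (k:ℝ) := by exact_mod_cast hj0k.le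
      linarith
    have h2 : ((k:ℝ) * (1 - t)) ^ j₀ ≤ ((k + 1 - j₀ : ℕ) : ℝ) ^ j₀ := by
      rw [hkt, hsub]
      exact pow_le_pow_left₀ hb (by linarith) j₀
    calc ((k:ℝ) * (1 - t)) ^ j₀ / (Nat.factorial j₀ : ℝ)
        ≤ ((k + 1 - j₀ : ℕ) : ℝ) ^ j₀ / (Nat.factorial j₀ : ℝ) :=
          (div_le_div_iff_of_pos_right hfac).mpr h2
      _ ≤ (k.choose j₀ : ℝ) := by
          have h := Nat.pow_le_choose (α := ℝ) j₀ k
          push_cast at h ⊢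
          convert h using 3
  -- basic exponential inequality: exp(-(t/(1-t))) ≤ 1 - t
  have hexp1 : Real.exp (-(t / (1 - t))) ≤ 1 - t := by
    have h := Real.add_one_le_exp (t / (1 - t))
    have h2 : (1 - t)⁻¹ ≤ Real.exp (t / (1 - t)) := by
      have he : (1 - t)⁻¹ = t / (1 - t) + 1 := by field_simp; ring
      rw [he]; exact h
    rw [Real.exp_neg]
    rw [inv_le_comm₀ (Real.exp_pos _) h1t]
    exact h2
  -- key exponent inequality
  have hδ : (0:ℝ) < 1 - 1 / Real.exp 1 - 1 / 2 := by
    have h2 : 1 / Real.exp 1 < 1/2 := by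
      rw [div_lt_div_iff₀ (Real.exp_pos 1) (by norm_num : (0:ℝ) < 2)]
      linarith
    linarith
  have hδle : 1 - 1 / Real.exp 1 - 1 / 2 ≤ 1 - t := by
    have hte : t ≤ 1 / Real.exp 1 := by
      rw [one_div, ← Real.exp_neg]
      exact htx.trans hxe
    linarith
  have h1 : (j₀:ℝ) * t ≤ (n:ℝ) * x ^ 2 := by
    have hj2 : (j₀:ℝ) ^ 2 ≤ ((k:ℝ) * x) ^ 2 := by
      apply pow_le_pow_left₀ (by positivity) hfl 2
    have heq : (j₀:ℝ) * t = (j₀:ℝ) ^ 2 / k := by rw [htdef]; ring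
    rw [heq, div_le_iff₀ hk0]
    have h3 : (k:ℝ) * ((k:ℝ) * x ^ 2) ≤ (n:ℝ) * ((k:ℝ) * x ^ 2) :=
      mul_le_mul_of_nonneg_right hkn' (by positivity)
    calc (j₀:ℝ) ^ 2 ≤ ((k:ℝ) * x) ^ 2 := hj2
      _ = (k:ℝ) * ((k:ℝ) * x ^ 2) := by ring
      _ ≤ (n:ℝ) * ((k:ℝ) * x ^ 2) := h3
      _ = (n:ℝ) * x ^ 2 * (k:ℝ) := by ring
  have h2 : (n:ℝ) * t ^ 2 ≤ (n:ℝ) * x ^ 2 := by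
    apply mul_le_mul_of_nonneg_left _ (by positivity)
    exact pow_le_pow_left₀ ht0 htx 2
  have hC : C = -(2 * (n:ℝ) * x ^ 2) / (1 - 1 / Real.exp 1 - 1 / 2) := by
    rw [hCdef, hx2]
  have hmain : ((j₀:ℝ) * t + (n:ℝ) * t ^ 2) / (1 - t)
      ≤ (2 * (n:ℝ) * x ^ 2) / (1 - 1 / Real.exp 1 - 1 / 2) :=
    div_le_div₀ (by positivity) (by linarith) hδ hδle
  have key : ((j₀:ℝ) + n) * (t / (1 - t)) ≤ (n:ℝ) * t - C := by
    have heq : ((j₀:ℝ) + n) * (t / (1 - t))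
        = (n:ℝ) * t + ((j₀:ℝ) * t + (n:ℝ) * t ^ 2) / (1 - t) := by
      field_simp; ring
    rw [heq, hC]; ring_nf; ring_nf at hmain; linarith
  have hxj : x ^ j₀ = Real.exp (-((n:ℝ) * t)) := by
    rw [hxdef, ← Real.exp_nat_mul]
    congr 1; rw [htdef]; ring
  have hlower : f j₀ * Real.exp C ≤ bnk n k j₀ := by
    calc f j₀ * Real.exp C
        = (k:ℝ) ^ j₀ / (Nat.factorial j₀ : ℝ) * (Real.exp (-((n:ℝ) * t)) * Real.exp C) := by
          rw [hfdef]; simp only; rw [hlamdef, mul_pow, hxj]; ring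
      _ = (k:ℝ) ^ j₀ / (Nat.factorial j₀ : ℝ) * Real.exp (-((n:ℝ) * t) + C) := by
          rw [Real.exp_add]
      _ ≤ (k:ℝ) ^ j₀ / (Nat.factorial j₀ : ℝ)
            * Real.exp (((j₀:ℝ) + n) * (-(t / (1 - t)))) := by
          apply mul_le_mul_of_nonneg_left _ (by positivity)
          apply Real.exp_le_exp.mpr
          nlinarith [key]
      _ = (k:ℝ) ^ j₀ / (Nat.factorial j₀ : ℝ) * Real.exp (-(t / (1 - t))) ^ (j₀ + n) := by
          rw [← Real.exp_nat_mul]; congr 1; push_cast; ring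
      _ ≤ (k:ℝ) ^ j₀ / (Nat.factorial j₀ : ℝ) * (1 - t) ^ (j₀ + n) := by
          apply mul_le_mul_of_nonneg_left _ (by positivity)
          exact pow_le_pow_left₀ (Real.exp_nonneg _) hexp1 _
      _ = ((k:ℝ) * (1 - t)) ^ j₀ / (Nat.factorial j₀ : ℝ) * (1 - t) ^ n := by
          rw [mul_pow, pow_add]; ring
      _ ≤ (k.choose j₀ : ℝ) * (1 - t) ^ n := by
          apply mul_le_mul_of_nonneg_right hch (by positivity)
      _ = bnk n k j₀ := by rw [bnk, htdef]
  constructor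
  · exact le_trans hlower hfle
  · exact hupper
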